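/- Let L be a coatomic logic which enjoys the simple local IL (with respect to some family). Then a rule Γ ⊢ φ̄ is antiadmissible in L if and only if for every Δ ⊆ Fm: φ̄ ∪ Δ ⊢_L Fm implies Γ ∪ Δ ⊢_L Fm. Moreover, in this condition Δ may be restricted to range over the simple theories of L. -/

import Mathlib

set_option linter.unusedVariables false

open FirstOrder Set

universe u

/-- Substitution composition for terms of a first-order language. -/
theorem FirstOrder.Language.Term.subst_subst' {L : FirstOrder.Language.{u, u}} {α β γ : Type u}
    (t : L.Term α) (f : α → L.Term β) (g : β → L.Term γ) :
    (t.subst f).subst g = t.subst (fun i => (f i).subst g) := by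
  induction t with
  | var => rfl
  | func f ts ih => simp only [Language.Term.subst, ih]

/-- A logic over the absolutely free algebra of `L`-terms in variables `Var`. -/
structure Logic (L : FirstOrder.Language.{u, u}) (Var : Type u) where
  Deriv : Set (L.Term Var) → L.Term Var → Prop
  deriv_refl : ∀ φ : L.Term Var, Deriv {φ} φ
  deriv_mono : ∀ {Γ Δ : Set (L.Term Var)} {φ : L.Term Var}, Deriv Γ φ → Γ ⊆ Δ → Deriv Δ φ
  deriv_cut : ∀ {Γ Φ : Set (L.Term Var)} {φ : L.Term Var},
      (∀ ψ ∈ Φ, Deriv Γ ψ) → Deriv Φ φ → Deriv Γ φ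
  deriv_subst : ∀ {Γ : Set (L.Term Var)} {φ : L.Term Var} (σ : Var → L.Term Var),
      Deriv Γ φ → Deriv ((fun t => t.subst σ) '' Γ) (φ.subst σ)

namespace Logic

variable {L : FirstOrder.Language.{u, u}} {Var : Type u} (Lg : Logic L Var)

/-- `Γ ⊢ φ` for every `φ ∈ Δ`. -/
def DerivAll (Γ Δ : Set (L.Term Var)) : Prop := ∀ φ ∈ Δ, Lg.Deriv Γ φ

/-- `Γ ⊢ Fm`, i.e. `Γ` derives every formula. -/
def Inc (Γ : Set (L.Term Var)) : Prop := ∀ φ : L.Term Var, Lg.Deriv Γ φ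

/-- A theory of the logic: a deductively closed set of formulas. -/
def IsTheory (T : Set (L.Term Var)) : Prop := ∀ φ : L.Term Var, Lg.Deriv T φ → φ ∈ T

/-- A simple theory: a maximal non-trivial theory. -/
def IsSimple (T : Set (L.Term Var)) : Prop :=
  Lg.IsTheory T ∧ T ≠ univ ∧
    ∀ T' : Set (L.Term Var), Lg.IsTheory T' → T' ≠ univ → T ⊆ T' → T' = T

/-- A semisimple theory: an intersection of simple theories. -/
def IsSemisimple (T : Set (L.Term Var)) : Prop :=
  ∃ S : Set (Set (L.Term Var)), (∀ U ∈ S, Lg.IsSimple U) ∧ T = ⋂₀ S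

/-- A semisimple logic: every theory is an intersection of simple theories. -/
def Semisimple : Prop := ∀ T : Set (L.Term Var), Lg.IsTheory T → Lg.IsSemisimple T

/-- A coatomic logic: every non-trivial theory extends to a simple theory. -/
def Coatomic : Prop :=
  ∀ T : Set (L.Term Var), Lg.IsTheory T → T ≠ univ → ∃ U, Lg.IsSimple U ∧ T ⊆ U

/-- A matrix `⟨A, F⟩` is a model of the logic if the preimage of `F` under any
homomorphism (equivalently, the realization along any valuation) is a theory. -/
def IsModel (A : Type u) [L.Structure A] (F : Set A) : Prop :=
  ∀ v : Var → A, Lg.IsTheory {φ : L.Term Var | φ.realize v ∈ F}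

/-- `Γ ⊢ ∅`: `Γ` cannot be jointly designated in any non-trivial model. -/
def Antitheorem (Γ : Set (L.Term Var)) : Prop :=
  ∀ (A : Type u) [L.Structure A], ∀ F : Set A, Lg.IsModel A F → F ≠ univ →
    ∀ v : Var → A, ¬((fun φ : L.Term Var => φ.realize v) '' Γ ⊆ F)

/-- κ-compactness: every inconsistent set has an inconsistent subset of size `< κ`. -/
def Compact (κ : Cardinal.{u}) : Prop :=
  ∀ Γ : Set (L.Term Var), Lg.Inc Γ → ∃ Γ' ⊆ Γ, Cardinal.mk ↥Γ' < κ ∧ Lg.Inc Γ'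

/-- κ-arity: any derivation uses fewer than κ premises. -/
def Ary (κ : Cardinal.{u}) : Prop :=
  ∀ (Γ : Set (L.Term Var)) (φ : L.Term Var), Lg.Deriv Γ φ →
    ∃ Γ' ⊆ Γ, Cardinal.mk ↥Γ' < κ ∧ Lg.Deriv Γ' φ

end Logic

/-- A parametrized family: for each ordinal `α`, a family of sets of formulas in
`α`-many variable slots together with parameter slots (indexed by `Var`). -/
abbrev PFam (L : FirstOrder.Language.{u, u}) (Var : Type u) : Type (u + 1) :=
  ∀ α : Ordinal.{u}, Set (Set (L.Term (α.ToType ⊕ Var)))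

/-- A local (parameter-free) family. -/
abbrev LFam (L : FirstOrder.Language.{u, u}) (Var : Type u) : Type (u + 1) :=
  ∀ α : Ordinal.{u}, Set (Set (L.Term α.ToType))

/-- A global family: a single set of formulas for each ordinal `α`. -/
abbrev GFam (L : FirstOrder.Language.{u, u}) (Var : Type u) : Type (u + 1) :=
  ∀ α : Ordinal.{u}, Set (L.Term α.ToType)

namespace Logic

variable {L : FirstOrder.Language.{u, u}} {Var : Type u}

/-- `I(φ̄, π̄)`: instantiation of a parametrized set of formulas. -/
def pInst {α : Ordinal.{u}} (I : Set (L.Term (α.ToType ⊕ Var)))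
    (phis : α.ToType → L.Term Var) (pis : Var → L.Term Var) : Set (L.Term Var) :=
  (fun t => t.subst (Sum.elim phis pis)) '' I

/-- `I(φ̄)`: instantiation of a parameter-free set of formulas. -/
def lInst {α : Ordinal.{u}} (I : Set (L.Term α.ToType))
    (phis : α.ToType → L.Term Var) : Set (L.Term Var) :=
  (fun t => t.subst phis) '' I

variable (Lg : Logic L Var)

/-- The κ-ary parametrized local inconsistency lemma w.r.t. the family `Ψ`. -/
def ParamLocalIL (κ : Cardinal.{u}) (Ψ : PFam L Var) : Prop :=
  ∀ α : Ordinal.{u}, 0 < α → α < κ.ord →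
    ∀ (Γ : Set (L.Term Var)) (phis : α.ToType → L.Term Var),
      Lg.Inc (Γ ∪ range phis) ↔
        ∃ I ∈ Ψ α, ∃ pis : Var → L.Term Var, Lg.DerivAll Γ (pInst I phis pis)

/-- The κ-ary local inconsistency lemma w.r.t. the family `Ψ`. -/
def LocalIL (κ : Cardinal.{u}) (Ψ : LFam L Var) : Prop :=
  ∀ α : Ordinal.{u}, 0 < α → α < κ.ord →
    ∀ (Γ : Set (L.Term Var)) (phis : α.ToType → L.Term Var),
      Lg.Inc (Γ ∪ range phis) ↔ ∃ I ∈ Ψ α, Lg.DerivAll Γ (lInst I phis)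

/-- The κ-ary global inconsistency lemma w.r.t. the family `Ψ`. -/
def GlobalIL (κ : Cardinal.{u}) (Ψ : GFam L Var) : Prop :=
  Lg.LocalIL κ (fun α => {Ψ α})

/-- The κ-ary dual parametrized local inconsistency lemma w.r.t. the family `Ψ`. -/
def DualParamLocalIL (κ : Cardinal.{u}) (Ψ : PFam L Var) : Prop :=
  ∀ α : Ordinal.{u}, 0 < α → α < κ.ord →
    ∀ (Γ : Set (L.Term Var)) (phis : α.ToType → L.Term Var),
      (∀ i, Lg.Deriv Γ (phis i)) ↔
        ∀ I ∈ Ψ α, ∀ pis : Var → L.Term Var, Lg.Inc (Γ ∪ pInst I phis pis)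

/-- The κ-ary dual local inconsistency lemma w.r.t. the family `Ψ`. -/
def DualLocalIL (κ : Cardinal.{u}) (Ψ : LFam L Var) : Prop :=
  ∀ α : Ordinal.{u}, 0 < α → α < κ.ord →
    ∀ (Γ : Set (L.Term Var)) (phis : α.ToType → L.Term Var),
      (∀ i, Lg.Deriv Γ (phis i)) ↔ ∀ I ∈ Ψ α, Lg.Inc (Γ ∪ lInst I phis)

/-- The κ-ary dual global inconsistency lemma w.r.t. the family `Ψ`. -/
def DualGlobalIL (κ : Cardinal.{u}) (Ψ : GFam L Var) : Prop :=
  Lg.DualLocalIL κ (fun α => {Ψ α})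

/-- The κ-ary classical parametrized local IL: both the ordinary and dual IL. -/
def ClassicalParamLocalIL (κ : Cardinal.{u}) (Ψ : PFam L Var) : Prop :=
  Lg.ParamLocalIL κ Ψ ∧ Lg.DualParamLocalIL κ Ψ

/-- The κ-ary classical local IL: both the ordinary and dual IL. -/
def ClassicalLocalIL (κ : Cardinal.{u}) (Ψ : LFam L Var) : Prop :=
  Lg.LocalIL κ Ψ ∧ Lg.DualLocalIL κ Ψ

/-- The κ-ary classical global IL: both the ordinary and dual IL. -/
def ClassicalGlobalIL (κ : Cardinal.{u}) (Ψ : GFam L Var) : Prop :=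
  Lg.GlobalIL κ Ψ ∧ Lg.DualGlobalIL κ Ψ

/-- The κ-ary parametrized local law of the excluded middle w.r.t. `Ψ`. -/
def ParamLocalLEM (κ : Cardinal.{u}) (Ψ : PFam L Var) : Prop :=
  (∀ α : Ordinal.{u}, 0 < α → α < κ.ord → ∀ I ∈ Ψ α,
    ∀ (phis : α.ToType → L.Term Var) (pis : Var → L.Term Var),
      Lg.Inc (range phis ∪ pInst I phis pis)) ∧
  (∀ α : Ordinal.{u}, 0 < α → α < κ.ord →
    ∀ (Γ : Set (L.Term Var)) (phis : α.ToType → L.Term Var) (ψ : L.Term Var),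
      Lg.Deriv (Γ ∪ range phis) ψ →
      (∀ I ∈ Ψ α, ∀ pis : Var → L.Term Var, Lg.Deriv (Γ ∪ pInst I phis pis) ψ) →
      Lg.Deriv Γ ψ)

/-- The κ-ary local law of the excluded middle w.r.t. `Ψ`. -/
def LocalLEM (κ : Cardinal.{u}) (Ψ : LFam L Var) : Prop :=
  (∀ α : Ordinal.{u}, 0 < α → α < κ.ord → ∀ I ∈ Ψ α,
    ∀ phis : α.ToType → L.Term Var, Lg.Inc (range phis ∪ lInst I phis)) ∧
  (∀ α : Ordinal.{u}, 0 < α → α < κ.ord →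
    ∀ (Γ : Set (L.Term Var)) (phis : α.ToType → L.Term Var) (ψ : L.Term Var),
      Lg.Deriv (Γ ∪ range phis) ψ →
      (∀ I ∈ Ψ α, Lg.Deriv (Γ ∪ lInst I phis) ψ) → Lg.Deriv Γ ψ)

/-- The κ-ary simple parametrized local IL w.r.t. `Ψ`. -/
def SimpleParamLocalIL (κ : Cardinal.{u}) (Ψ : PFam L Var) : Prop :=
  (∀ α : Ordinal.{u}, 0 < α → α < κ.ord → ∀ I ∈ Ψ α,
    ∀ (phis : α.ToType → L.Term Var) (pis : Var → L.Term Var),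
      Lg.Inc (range phis ∪ pInst I phis pis)) ∧
  (∀ α : Ordinal.{u}, 0 < α → α < κ.ord →
    ∀ T : Set (L.Term Var), Lg.IsSimple T → ∀ phis : α.ToType → L.Term Var,
      Lg.Inc (T ∪ range phis) →
        ∃ I ∈ Ψ α, ∃ pis : Var → L.Term Var, Lg.DerivAll T (pInst I phis pis))

/-- The κ-ary simple local IL w.r.t. `Ψ`. -/
def SimpleLocalIL (κ : Cardinal.{u}) (Ψ : LFam L Var) : Prop :=
  (∀ α : Ordinal.{u}, 0 < α → α < κ.ord → ∀ I ∈ Ψ α,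
    ∀ phis : α.ToType → L.Term Var, Lg.Inc (range phis ∪ lInst I phis)) ∧
  (∀ α : Ordinal.{u}, 0 < α → α < κ.ord →
    ∀ T : Set (L.Term Var), Lg.IsSimple T → ∀ phis : α.ToType → L.Term Var,
      Lg.Inc (T ∪ range phis) → ∃ I ∈ Ψ α, Lg.DerivAll T (lInst I phis))

end Logic

/-- Family for the parametrized local DDT: sets of formulas `I(p̄, q, r̄)`. -/
abbrev PFamD (L : FirstOrder.Language.{u, u}) (Var : Type u) : Type (u + 1) :=
  ∀ α : Ordinal.{u}, Set (Set (L.Term (α.ToType ⊕ (PUnit.{u + 1} ⊕ Var))))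

/-- Family for the local DDT: sets of formulas `I(p̄, q)`. -/
abbrev LFamD (L : FirstOrder.Language.{u, u}) (Var : Type u) : Type (u + 1) :=
  ∀ α : Ordinal.{u}, Set (Set (L.Term (α.ToType ⊕ PUnit.{u + 1})))

/-- Family for the global DDT: a single set `I(p̄, q)` for each `α`. -/
abbrev GFamD (L : FirstOrder.Language.{u, u}) (Var : Type u) : Type (u + 1) :=
  ∀ α : Ordinal.{u}, Set (L.Term (α.ToType ⊕ PUnit.{u + 1}))

namespace Logic

variable {L : FirstOrder.Language.{u, u}} {Var : Type u}

/-- `I(φ̄, ψ)`: instantiation of a DDT set of formulas. -/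
def dInst {α : Ordinal.{u}} (I : Set (L.Term (α.ToType ⊕ PUnit.{u + 1})))
    (phis : α.ToType → L.Term Var) (ψ : L.Term Var) : Set (L.Term Var) :=
  (fun t => t.subst (Sum.elim phis (fun _ => ψ))) '' I

/-- `I(φ̄, ψ, π̄)`: instantiation of a parametrized DDT set of formulas. -/
def pdInst {α : Ordinal.{u}} (I : Set (L.Term (α.ToType ⊕ (PUnit.{u + 1} ⊕ Var))))
    (phis : α.ToType → L.Term Var) (ψ : L.Term Var) (pis : Var → L.Term Var) :
    Set (L.Term Var) :=
  (fun t => t.subst (Sum.elim phis (Sum.elim (fun _ => ψ) pis))) '' I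

variable (Lg : Logic L Var)

/-- The κ-ary local deduction--detachment theorem w.r.t. `Φ`. -/
def LocalDDT (κ : Cardinal.{u}) (Φ : LFamD L Var) : Prop :=
  ∀ α : Ordinal.{u}, 0 < α → α < κ.ord →
    ∀ (Γ : Set (L.Term Var)) (phis : α.ToType → L.Term Var) (ψ : L.Term Var),
      Lg.Deriv (Γ ∪ range phis) ψ ↔ ∃ I ∈ Φ α, Lg.DerivAll Γ (dInst I phis ψ)

/-- The κ-ary global deduction--detachment theorem w.r.t. `Φ`. -/
def GlobalDDT (κ : Cardinal.{u}) (Φ : GFamD L Var) : Prop :=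
  Lg.LocalDDT κ (fun α => {Φ α})

/-- The κ-ary parametrized local deduction--detachment theorem w.r.t. `Φ`. -/
def ParamLocalDDT (κ : Cardinal.{u}) (Φ : PFamD L Var) : Prop :=
  ∀ α : Ordinal.{u}, 0 < α → α < κ.ord →
    ∀ (Γ : Set (L.Term Var)) (phis : α.ToType → L.Term Var) (ψ : L.Term Var),
      Lg.Deriv (Γ ∪ range phis) ψ ↔
        ∃ I ∈ Φ α, ∃ pis : Var → L.Term Var, Lg.DerivAll Γ (pdInst I phis ψ pis)

/-- A protoimplication set: a set `Δ(p, q)` of formulas in two variables with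
`∅ ⊢ Δ(p, p)` and `p, Δ(p, q) ⊢ q` (stated via all instances, by structurality). -/
def HasProtoimplication : Prop :=
  ∃ Δ : Set (L.Term (ULift.{u} Bool)),
    (∀ φ : L.Term Var,
      Lg.DerivAll ∅ ((fun t => t.subst (fun _ => φ)) '' Δ)) ∧
    (∀ φ ψ : L.Term Var,
      Lg.Deriv (insert φ ((fun t => t.subst (fun b => if b.down then ψ else φ)) '' Δ)) ψ)

/-- A rule `Γ ⊢ φ̄` is antiadmissible: substitution instances preserve
inconsistency in every context. -/
def Antiadmissible {ι : Type u} (Γ : Set (L.Term Var)) (phis : ι → L.Term Var) : Prop :=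
  ∀ (σ : Var → L.Term Var) (Δ : Set (L.Term Var)),
    Lg.Inc (range (fun i => (phis i).subst σ) ∪ Δ) →
    Lg.Inc ((fun t => t.subst σ) '' Γ ∪ Δ)

/-- The semisimple companion of a logic: the logic determined by the
simple theories of `Lg`. -/
def companion (Lg : Logic L Var) : Logic L Var where
  Deriv Γ φ := ∀ T : Set (L.Term Var), Lg.IsSimple T →
    ∀ σ : Var → L.Term Var, (fun t => t.subst σ) '' Γ ⊆ T → φ.subst σ ∈ T
  deriv_refl := by
    intro φ T _ σ h
    exact h ⟨φ, rfl, rfl⟩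
  deriv_mono := by
    intro Γ Δ φ hΓ hsub T hT σ h
    exact hΓ T hT σ (fun x hx => h ((Set.image_mono hsub) hx))
  deriv_cut := by
    intro Γ Φ φ hΓ hΦ T hT σ h
    refine hΦ T hT σ ?_
    rintro x ⟨ψ, hψ, rfl⟩
    exact hΓ ψ hψ T hT σ h
  deriv_subst := by
    intro Γ φ σ hΓ T hT τ h
    rw [FirstOrder.Language.Term.subst_subst']
    refine hΓ T hT (fun v => (σ v).subst τ) ?_
    rintro x ⟨ψ, hψ, rfl⟩
    show (ψ.subst fun v => (σ v).subst τ) ∈ T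
    rw [← FirstOrder.Language.Term.subst_subst']
    exact h ⟨ψ.subst σ, ⟨ψ, hψ, rfl⟩, rfl⟩

/-- Equivalence of two parametrized IL families, stated through all of their
instances (which, by structurality, is equivalent to the schematic entailments
`I(p̄, q̄) ⊢ I'(p̄, π̄')`). -/
def FamEquiv (Lg : Logic L Var) (κ : Cardinal.{u}) (Ψ Ψ' : PFam L Var) : Prop :=
  (∀ α : Ordinal.{u}, 0 < α → α < κ.ord →
    ∀ I ∈ Ψ α, ∃ I' ∈ Ψ' α, ∃ pis' : Var → L.Term (α.ToType ⊕ Var),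
      ∀ (phis : α.ToType → L.Term Var) (rhos : Var → L.Term Var),
        Lg.DerivAll (pInst I phis rhos)
          (pInst I' phis (fun v => (pis' v).subst (Sum.elim phis rhos)))) ∧
  (∀ α : Ordinal.{u}, 0 < α → α < κ.ord →
    ∀ I' ∈ Ψ' α, ∃ I ∈ Ψ α, ∃ pis : Var → L.Term (α.ToType ⊕ Var),
      ∀ (phis : α.ToType → L.Term Var) (rhos : Var → L.Term Var),
        Lg.DerivAll (pInst I' phis rhos)
          (pInst I phis (fun v => (pis v).subst (Sum.elim phis rhos))))

end Logic



section Helpers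

open Logic

variable {L : FirstOrder.Language.{u, u}} {Var : Type u} (Lg : Logic L Var)

lemma term_subst_var (t : L.Term Var) : t.subst FirstOrder.Language.Term.var = t := by
  induction t with
  | var => rfl
  | func f ts ih => simp only [Language.Term.subst, ih]

lemma inc_mono {X Y : Set (L.Term Var)} (h : X ⊆ Y) (hX : Lg.Inc X) : Lg.Inc Y :=
  fun φ => Lg.deriv_mono (hX φ) h

lemma deriv_of_mem {X : Set (L.Term Var)} {φ : L.Term Var} (h : φ ∈ X) : Lg.Deriv X φ :=
  Lg.deriv_mono (Lg.deriv_refl φ) (Set.singleton_subset_iff.2 h)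

/-- The deductive closure of a set is a theory containing it. -/
lemma closure_theory (X : Set (L.Term Var)) :
    Lg.IsTheory {ψ | Lg.Deriv X ψ} ∧ X ⊆ {ψ | Lg.Deriv X ψ} := by
  constructor
  · intro φ h
    exact Lg.deriv_cut (fun ψ hψ => hψ) h
  · intro φ hφ
    exact deriv_of_mem Lg hφ

/-- A theory is trivial iff it is inconsistent. -/
lemma theory_eq_univ_of_inc {T : Set (L.Term Var)} (hT : Lg.IsTheory T)
    (h : Lg.Inc T) : T = univ :=
  Set.eq_univ_of_forall fun φ => hT φ (h φ)

/-- Extend a consistent set to a simple theory (in a coatomic logic). -/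
lemma extend_simple (hco : Lg.Coatomic) {X : Set (L.Term Var)} (h : ¬ Lg.Inc X) :
    ∃ T, Lg.IsSimple T ∧ X ⊆ T := by
  obtain ⟨hth, hsub⟩ := closure_theory Lg X
  have hne : {ψ | Lg.Deriv X ψ} ≠ univ := by
    intro he
    exact h fun φ => (Set.eq_univ_iff_forall.mp he φ : Lg.Deriv X φ)
  obtain ⟨T, hTs, hTsub⟩ := hco _ hth hne
  exact ⟨T, hTs, hsub.trans hTsub⟩

/-- If `T` is simple and `φ ∉ T` then `T ∪ {φ}` is inconsistent. -/
lemma inc_insert_of_simple {T : Set (L.Term Var)} (hT : Lg.IsSimple T)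
    {φ : L.Term Var} (h : φ ∉ T) : Lg.Inc (T ∪ {φ}) := by
  set T1 : Set (L.Term Var) := {ψ | Lg.Deriv (T ∪ {φ}) ψ} with hT1
  obtain ⟨hth, hsub⟩ := closure_theory Lg (T ∪ {φ})
  by_cases hne : T1 = univ
  · intro ψ
    have : ψ ∈ T1 := hne ▸ Set.mem_univ ψ
    exact this
  · exfalso
    have hTT1 : T ⊆ T1 := fun x hx => hsub (Or.inl hx)
    have := hT.2.2 T1 hth hne hTT1
    exact h (this ▸ hsub (Or.inr rfl))

/-- The preimage of a theory under a substitution is a theory. -/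
lemma preimage_theory {T : Set (L.Term Var)} (hT : Lg.IsTheory T)
    (σ : Var → L.Term Var) : Lg.IsTheory {ψ | ψ.subst σ ∈ T} := by
  intro φ h
  have h2 := Lg.deriv_subst σ h
  have h3 : Lg.Deriv T (φ.subst σ) := by
    refine Lg.deriv_mono h2 ?_
    rintro x ⟨ψ, hψ, rfl⟩
    exact hψ
  exact hT _ h3

/-- Key implication: the simple-theory criterion implies antiadmissibility
(in a coatomic logic with the simple local IL). -/
lemma key_antiadmissible (hco : Lg.Coatomic)
    (hsil : ∃ Ψ : LFam L Var, Lg.SimpleLocalIL 2 Ψ)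
    {ι : Type u} (Γ : Set (L.Term Var)) (phis : ι → L.Term Var)
    (hall : ∀ Δ : Set (L.Term Var), Lg.Inc (range phis ∪ Δ) → Lg.Inc (Γ ∪ Δ)) :
    Lg.Antiadmissible Γ phis := by
  obtain ⟨Ψ, hΨ1, hΨ2⟩ := hsil
  have h01 : (0 : Ordinal.{u}) < 1 := zero_lt_one
  have h12 : (1 : Ordinal.{u}) < (2 : Cardinal.{u}).ord := by
    rw [Cardinal.lt_ord]; simp
  have hne1 : Nonempty (Ordinal.ToType 1) := by
    rw [Ordinal.nonempty_toType_iff]; exact one_ne_zero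
  intro σ Δ hinc
  by_contra hnot
  obtain ⟨T, hTs, hTsub⟩ := extend_simple Lg hco hnot
  -- `T` is simple, contains `σ[Γ] ∪ Δ`
  have hincT : Lg.Inc (range (fun i => (phis i).subst σ) ∪ T) :=
    inc_mono Lg (Set.union_subset_union_right _ (fun x hx => hTsub (Or.inr hx))) hinc
  -- find `i` with `σ(φᵢ) ∉ T`
  by_cases hallin : ∀ i, (phis i).subst σ ∈ T
  · have : range (fun i => (phis i).subst σ) ∪ T ⊆ T := by
      rintro x (⟨i, rfl⟩ | hx)
      · exact hallin i
      · exact hx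
    have : Lg.Inc T := inc_mono Lg this hincT
    exact hTs.2.1 (theory_eq_univ_of_inc Lg hTs.1 this)
  push_neg at hallin
  obtain ⟨i, hi⟩ := hallin
  -- `T ∪ {σ(φᵢ)}` is inconsistent
  have hincT1 : Lg.Inc (T ∪ {(phis i).subst σ}) := inc_insert_of_simple Lg hTs hi
  -- apply the simple local IL with the 1-tuple `σ(φᵢ)`
  set phis' : Ordinal.ToType 1 → L.Term Var := fun _ => (phis i).subst σ with hphis'
  have hincT2 : Lg.Inc (T ∪ range phis') := by
    refine inc_mono Lg ?_ hincT1
    refine Set.union_subset_union_right _ ?_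
    rintro x rfl
    exact ⟨Classical.arbitrary _, rfl⟩
  obtain ⟨I, hI, hder⟩ := hΨ2 1 h01 h12 T hTs phis' hincT2
  -- transfer to the preimage theory `S`
  set phis0 : Ordinal.ToType 1 → L.Term Var := fun _ => phis i with hphis0
  set S : Set (L.Term Var) := {ψ | ψ.subst σ ∈ T} with hS
  have hSth : Lg.IsTheory S := preimage_theory Lg hTs.1 σ
  have hΓS : Γ ⊆ S := fun γ hγ => hTsub (Or.inl ⟨γ, hγ, rfl⟩)
  have hIS : Logic.lInst I phis0 ⊆ S := by
    rintro x ⟨t, ht, rfl⟩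
    show (t.subst phis0).subst σ ∈ T
    rw [FirstOrder.Language.Term.subst_subst']
    exact hTs.1 _ (hder _ ⟨t, ht, rfl⟩)
  -- inconsistency of `range phis ∪ S`
  have hinc0 : Lg.Inc (range phis0 ∪ Logic.lInst I phis0) := hΨ1 1 h01 h12 I hI phis0
  have hincS : Lg.Inc (range phis ∪ S) := by
    refine inc_mono Lg ?_ hinc0
    rintro x (⟨j, rfl⟩ | hx)
    · exact Or.inl ⟨i, rfl⟩
    · exact Or.inr (hIS hx)
  have hincΓS : Lg.Inc (Γ ∪ S) := hall S hincS
  have hincS' : Lg.Inc S := inc_mono Lg (Set.union_subset hΓS subset_rfl) hincΓS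
  have : S = univ := theory_eq_univ_of_inc Lg hSth hincS'
  exact hi (Set.eq_univ_iff_forall.mp this (phis i) : (phis i).subst σ ∈ T)

end Helpers

/-- in a coatomic logic with the simple local IL, antiadmissibility
of `Γ ⊢ φ̄` reduces to preservation of inconsistency in every context `Δ`, and
`Δ` may even be restricted to simple theories. -/
theorem statement_17 {L : FirstOrder.Language.{u, u}} {Var : Type u} (Lg : Logic L Var) (hco : Lg.Coatomic)
    (hsil : ∃ Ψ : LFam L Var, Lg.SimpleLocalIL 2 Ψ)
    {ι : Type u} (Γ : Set (L.Term Var)) (phis : ι → L.Term Var) :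
    (Lg.Antiadmissible Γ phis ↔
      ∀ Δ : Set (L.Term Var), Lg.Inc (range phis ∪ Δ) → Lg.Inc (Γ ∪ Δ)) ∧
    (Lg.Antiadmissible Γ phis ↔
      ∀ T : Set (L.Term Var), Lg.IsSimple T →
        Lg.Inc (range phis ∪ T) → Lg.Inc (Γ ∪ T)) := by
  have h1 : Lg.Antiadmissible Γ phis →
      ∀ Δ : Set (L.Term Var), Lg.Inc (range phis ∪ Δ) → Lg.Inc (Γ ∪ Δ) := by
    intro ha Δ hΔ
    have h := ha FirstOrder.Language.Term.var Δ
    simp only [term_subst_var, Set.image_id'] at h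
    exact h hΔ
  have h3 : (∀ T : Set (L.Term Var), Lg.IsSimple T →
        Lg.Inc (range phis ∪ T) → Lg.Inc (Γ ∪ T)) →
      ∀ Δ : Set (L.Term Var), Lg.Inc (range phis ∪ Δ) → Lg.Inc (Γ ∪ Δ) := by
    intro h Δ hΔ
    by_contra hnot
    obtain ⟨T, hTs, hTsub⟩ := extend_simple Lg hco hnot
    have hΔT : Δ ⊆ T := fun x hx => hTsub (Or.inr hx)
    have hincT : Lg.Inc (range phis ∪ T) :=
      inc_mono Lg (Set.union_subset_union_right _ hΔT) hΔ
    have hincΓT : Lg.Inc (Γ ∪ T) := h T hTs hincT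
    have hΓT : Γ ⊆ T := fun x hx => hTsub (Or.inl hx)
    have : Lg.Inc T := inc_mono Lg (Set.union_subset hΓT subset_rfl) hincΓT
    exact hTs.2.1 (theory_eq_univ_of_inc Lg hTs.1 this)
  refine ⟨⟨h1, key_antiadmissible Lg hco hsil Γ phis⟩,
    ⟨fun ha T hT => h1 ha T, fun h => key_antiadmissible Lg hco hsil Γ phis (h3 h)⟩⟩
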